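/- If P is a σ_{Q≡R}E-propagator and Θ ⊨ Q≡R (i.e., the selection σ_{Q≡R}(σ_Θ E) = σ_Θ E), then σ_{Q≡R}P is also a σ_Θ E-propagator, and for all partial structures J, (σ_{Q≡R}P)(J) ≥_p P(J). -/

import Mathlib

/-- Truth values: encoded as pairs of `Prop` with the product order.
`u = (False,False)`, `t = (True,False)`, `f = (False,True)`, `i = (True,True)`;
the order is exactly the precision order generated by `u < t < i`, `u < f < i`. -/
abbrev TV := Prop × Prop

def TV.u : TV := (False, False)
def TV.t : TV := (True, False)
def TV.f : TV := (False, True)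
def TV.i : TV := (True, True)

/-- Four-valued structures over a set `D` of domain atoms, ordered pointwise. -/
abbrev PStruct (D : Type) := D → TV

def TwoValued {D : Type} (J : PStruct D) : Prop := ∀ a, J a = TV.t ∨ J a = TV.f

def Consistent {D : Type} (J : PStruct D) : Prop := ∀ a, J a ≠ TV.i

/-- A propagator: monotone and information-preserving. -/
def IsPropagator {D : Type} (P : PStruct D → PStruct D) : Prop :=
  Monotone P ∧ ∀ J, J ≤ P J

/-- `P` is an `E`-propagator: on two-valued structures it coincides with `E`. -/
def IsEPropagator {D : Type} (P : PStruct D → PStruct D) (E : Set (PStruct D)) : Prop :=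
  IsPropagator P ∧ ∀ I, TwoValued I → (P I = I ↔ I ∈ E)

/-- The selection module `σ_{Q≡R} E`: models of `E` interpreting `Q` and `R` equally.
Atoms `Q(d)` and `R(d)` are given by the maps `Qa Ra : T → D` from tuples to atoms. -/
def selModule {D T : Type} (Qa Ra : T → D) (E : Set (PStruct D)) : Set (PStruct D) :=
  {I | I ∈ E ∧ ∀ d, I (Qa d) = I (Ra d)}

/-- The selection propagator `σ_{Q≡R} P`: propagate with `P`, then interpret, for each
tuple `d`, both `Q(d)` and `R(d)` as the lub of their values in `P J`. -/
noncomputable def selProp {D T : Type} (Qa Ra : T → D) (P : PStruct D → PStruct D)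
    (J : PStruct D) : PStruct D :=
  fun a => P J a ⊔ ⨆ d ∈ {d | Qa d = a ∨ Ra d = a}, (P J (Qa d) ⊔ P J (Ra d))

/-- If `P` is an `M`-propagator for a module `M` with `σ_{Q≡R} M = M` (i.e. `Θ ⊨ Q≡R`
for `M = σ_Θ E`), then `σ_{Q≡R} P` is also an `M`-propagator and is at least as
precise as `P`. -/
theorem selection_equality_reasoning {D T : Type} (Qa Ra : T → D)
    (P : PStruct D → PStruct D) (M : Set (PStruct D))
    (hP : IsEPropagator P M) (hTheta : selModule Qa Ra M = M) :
    IsEPropagator (selProp Qa Ra P) M ∧ ∀ J, P J ≤ selProp Qa Ra P J := by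
  obtain ⟨⟨hmono, hinfl⟩, hfix⟩ := hP
  have hle : ∀ J, P J ≤ selProp Qa Ra P J := fun J a => le_sup_left
  refine ⟨⟨⟨?_, ?_⟩, ?_⟩, hle⟩
  · intro J J' h a
    exact sup_le_sup (hmono h a)
      (iSup_mono fun d => iSup_mono fun _ => sup_le_sup (hmono h _) (hmono h _))
  · intro J
    exact le_trans (hinfl J) (hle J)
  · intro I hI
    constructor
    · intro hfp
      have hPI : P I = I := le_antisymm (le_of_le_of_eq (hle I) hfp) (hinfl I)
      exact (hfix I hI).mp hPI
    · intro hM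
      have hIsel : I ∈ selModule Qa Ra M := hTheta.symm ▸ hM
      have hPI : P I = I := (hfix I hI).mpr hM
      have hQR := hIsel.2
      funext a
      apply le_antisymm
      · apply sup_le
        · simp [hPI]
        · apply iSup_le; intro d; apply iSup_le; intro hd
          rw [hPI]
          rcases hd with h | h
          · subst h; simp [hQR d]
          · subst h; simp [hQR d]
      · exact le_trans (hinfl I a) (hle I a)
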